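/- Under the SPPS formal power construction, the simpler bound max{|X^{(n)}(x)|, |Y^{(n)}(x)|, |X̃^{(n)}(x)|, |Ỹ^{(n)}(x)|} ≤ c · 2^n |x-x_0|^n ( c_1 c_2 |x-x_0| + c_3 )^n holds for all n ≥ 0 and x ∈ [a,b]. -/

import Mathlib

open Set intervalIntegral MeasureTheory

/-- The SPPS formal powers `(X⁽ⁿ⁾, Y⁽ⁿ⁾)` defined by the recursion
`X⁽ⁿ⁺¹⁾ = (n+1)∫ (-r₂₁ X⁽ⁿ⁾ - r₂₂ (g/f) Y⁽ⁿ⁾ + (p₂/f²) Z⁽ⁿ⁾)`,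
`Y⁽ⁿ⁺¹⁾ = (n+1)∫ (r₁₁ (f/g) X⁽ⁿ⁾ + r₁₂ Y⁽ⁿ⁾ + (p₁/g²) Z⁽ⁿ⁾)`, where
`Z⁽ⁿ⁾ = ∫ (X⁽ⁿ⁾(f²r₁₁+g²r₂₁) + Y⁽ⁿ⁾(f²r₁₂+g²r₂₂))`. -/
noncomputable def spps (p1 p2 r11 r12 r21 r22 f g : ℝ → ℂ) (x0 : ℝ) (X0 Y0 : ℝ → ℂ) :
    ℕ → (ℝ → ℂ) × (ℝ → ℂ)
  | 0 => (X0, Y0)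
  | n + 1 =>
    let X := (spps p1 p2 r11 r12 r21 r22 f g x0 X0 Y0 n).1
    let Y := (spps p1 p2 r11 r12 r21 r22 f g x0 X0 Y0 n).2
    let Z : ℝ → ℂ := fun x => ∫ s in x0..x,
      (X s * (f s ^ 2 * r11 s + g s ^ 2 * r21 s) + Y s * (f s ^ 2 * r12 s + g s ^ 2 * r22 s))
    (fun x => (n + 1 : ℂ) * ∫ s in x0..x,
        (-(r21 s) * X s - r22 s * (g s / f s) * Y s + p2 s / f s ^ 2 * Z s),
     fun x => (n + 1 : ℂ) * ∫ s in x0..x,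
        (r11 s * (f s / g s) * X s + r12 s * Y s + p1 s / g s ^ 2 * Z s))

/-- The SPPS formal power `Z⁽ⁿ⁾`. -/
noncomputable def sppsZ (p1 p2 r11 r12 r21 r22 f g : ℝ → ℂ) (x0 : ℝ) (X0 Y0 : ℝ → ℂ)
    (n : ℕ) : ℝ → ℂ := fun x => ∫ s in x0..x,
      ((spps p1 p2 r11 r12 r21 r22 f g x0 X0 Y0 n).1 s * (f s ^ 2 * r11 s + g s ^ 2 * r21 s)
        + (spps p1 p2 r11 r12 r21 r22 f g x0 X0 Y0 n).2 s * (f s ^ 2 * r12 s + g s ^ 2 * r22 s))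

/-- Initial formal power `X⁽⁰⁾(x) = f(x₀)g(x₀) ∫_{x₀}^x p₂/f²`. -/
noncomputable def sppsX0 (p2 f g : ℝ → ℂ) (x0 : ℝ) : ℝ → ℂ :=
  fun x => f x0 * g x0 * ∫ s in x0..x, p2 s / f s ^ 2

/-- Initial formal power `Y⁽⁰⁾(x) = 1 + f(x₀)g(x₀) ∫_{x₀}^x p₁/g²`. -/
noncomputable def sppsY0 (p1 f g : ℝ → ℂ) (x0 : ℝ) : ℝ → ℂ :=
  fun x => 1 + f x0 * g x0 * ∫ s in x0..x, p1 s / g s ^ 2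

/-- Initial formal power `X̃⁽⁰⁾(x) = 1 - f(x₀)g(x₀) ∫_{x₀}^x p₂/f²`. -/
noncomputable def sppsXt0 (p2 f g : ℝ → ℂ) (x0 : ℝ) : ℝ → ℂ :=
  fun x => 1 - f x0 * g x0 * ∫ s in x0..x, p2 s / f s ^ 2

/-- Initial formal power `Ỹ⁽⁰⁾(x) = -f(x₀)g(x₀) ∫_{x₀}^x p₁/g²`. -/
noncomputable def sppsYt0 (p1 f g : ℝ → ℂ) (x0 : ℝ) : ℝ → ℂ :=
  fun x => -(f x0 * g x0) * ∫ s in x0..x, p1 s / g s ^ 2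

/-- The max-norm (sup norm) of a function on `[a,b]`. -/
noncomputable def supNorm (a b : ℝ) (h : ℝ → ℂ) : ℝ :=
  sSup ((fun x => ‖h x‖) '' Icc a b)


lemma myAbsSub {x0 x s : ℝ} (h : s ∈ uIcc x0 x) : |s - x0| ≤ |x - x0| := by
  rcases le_total x0 x with hle | hle
  · rw [uIcc_of_le hle] at h
    rw [abs_of_nonneg (by linarith [h.1]), abs_of_nonneg (by linarith)]
    linarith [h.2]
  · rw [uIcc_of_ge hle] at h
    rw [abs_of_nonpos (by linarith [h.2]), abs_of_nonpos (by linarith)]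
    linarith [h.1]

lemma myIntAbsPow (x0 x : ℝ) (n : ℕ) :
    |∫ s in x0..x, |s - x0| ^ n| = |x - x0| ^ (n + 1) / (n + 1) := by
  rw [abs_intervalIntegral_eq, integral_pow_abs_sub_uIoc,
    abs_of_nonneg (by positivity : (0:ℝ) ≤ |x - x0| ^ (n + 1) / (n + 1))]

lemma myNormIntLe {G : ℝ → ℂ} {x0 x A : ℝ} {n : ℕ} (hA : 0 ≤ A)
    (hG : ∀ t ∈ uIoc x0 x, ‖G t‖ ≤ A * |t - x0| ^ n) :
    ‖∫ t in x0..x, G t‖ ≤ A * (|x - x0| ^ (n + 1) / (n + 1)) := by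
  have hb : IntervalIntegrable (fun t => A * |t - x0| ^ n) volume x0 x :=
    (continuous_const.mul
      ((continuous_abs.comp (continuous_sub_right x0)).pow n)).intervalIntegrable _ _
  have h := intervalIntegral.norm_integral_le_abs_of_norm_le
    (MeasureTheory.ae_restrict_of_forall_mem measurableSet_uIoc hG) hb
  calc ‖∫ t in x0..x, G t‖ ≤ |∫ t in x0..x, A * |t - x0| ^ n| := h
    _ = A * (|x - x0| ^ (n + 1) / (n + 1)) := by
        rw [intervalIntegral.integral_const_mul, abs_mul, abs_of_nonneg hA, myIntAbsPow]

lemma myOuter {G : ℝ → ℂ} {x0 x A : ℝ} {n : ℕ} (hA : 0 ≤ A)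
    (hG : ∀ s ∈ uIoc x0 x, ‖G s‖ ≤ A * |s - x0| ^ n) :
    ‖((n : ℂ) + 1) * ∫ s in x0..x, G s‖ ≤ A * |x - x0| ^ (n + 1) := by
  have h1 := myNormIntLe hA hG
  have h2 : ‖((n : ℂ) + 1)‖ = (n : ℝ) + 1 := by
    rw [show ((n : ℂ) + 1) = (((n : ℝ) + 1 : ℝ) : ℂ) by push_cast; ring, Complex.norm_real]
    exact abs_of_nonneg (by positivity)
  rw [norm_mul, h2]
  refine le_trans (mul_le_mul_of_nonneg_left h1 (by positivity)) (le_of_eq ?_)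
  field_simp

lemma myZbound {a b x0 x c1 D : ℝ} {n : ℕ} (w1 w2 X Y : ℝ → ℂ)
    (hx0 : x0 ∈ Icc a b) (hx : x ∈ Icc a b)
    (hDnn : 0 ≤ D) (hc1nn : 0 ≤ c1)
    (hw1 : ∀ t ∈ Icc a b, ‖w1 t‖ ≤ c1) (hw2 : ∀ t ∈ Icc a b, ‖w2 t‖ ≤ c1)
    (hX : ∀ t ∈ uIcc x0 x, ‖X t‖ ≤ D * |t - x0| ^ n)
    (hY : ∀ t ∈ uIcc x0 x, ‖Y t‖ ≤ D * |t - x0| ^ n)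
    {t : ℝ} (ht : t ∈ uIcc x0 x) :
    ‖∫ s in x0..t, (X s * w1 s + Y s * w2 s)‖ ≤ 2 * c1 * D * (|x - x0| * |t - x0| ^ n) := by
  have hsub : uIcc x0 x ⊆ Icc a b := uIcc_subset_Icc hx0 hx
  have h1 : ‖∫ s in x0..t, (X s * w1 s + Y s * w2 s)‖
      ≤ (2 * c1 * D) * (|t - x0| ^ (n + 1) / (n + 1)) := by
    apply myNormIntLe (by positivity)
    intro s hs
    have hs2 : s ∈ uIcc x0 x := uIcc_subset_uIcc left_mem_uIcc ht (uIoc_subset_uIcc hs)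
    have hsI : s ∈ Icc a b := hsub hs2
    have b1 := mul_le_mul (hX s hs2) (hw1 s hsI) (norm_nonneg _) (by positivity)
    have b2 := mul_le_mul (hY s hs2) (hw2 s hsI) (norm_nonneg _) (by positivity)
    calc ‖X s * w1 s + Y s * w2 s‖ ≤ ‖X s‖ * ‖w1 s‖ + ‖Y s‖ * ‖w2 s‖ := by
          refine (norm_add_le _ _).trans ?_
          rw [norm_mul, norm_mul]
      _ ≤ 2 * c1 * D * |s - x0| ^ n := by nlinarith [pow_nonneg (abs_nonneg (s - x0)) n]
  refine h1.trans ?_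
  have h3 : |t - x0| ≤ |x - x0| := myAbsSub ht
  have h2 : |t - x0| ^ (n + 1) / (n + 1) ≤ |x - x0| * |t - x0| ^ n := by
    rw [div_le_iff₀ (by positivity), pow_succ]
    nlinarith [mul_le_mul_of_nonneg_left h3 (pow_nonneg (abs_nonneg (t - x0)) n),
      mul_nonneg (mul_nonneg (pow_nonneg (abs_nonneg (t - x0)) n) (abs_nonneg (x - x0)))
        (Nat.cast_nonneg (α := ℝ) n)]
  exact mul_le_mul_of_nonneg_left h2 (by positivity)


/-- the simpler estimate for the formal powers X⁽ⁿ⁾, Y⁽ⁿ⁾, X̃⁽ⁿ⁾, Ỹ⁽ⁿ⁾. -/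
theorem spps_formal_power_simple_estimate (a b x0 : ℝ) (hab : a ≤ b) (hx0 : x0 ∈ Icc a b)
    (p1 p2 q r11 r12 r21 r22 f g : ℝ → ℂ)
    (hp1 : ContinuousOn p1 (Icc a b)) (hp2 : ContinuousOn p2 (Icc a b))
    (hq : ContinuousOn q (Icc a b))
    (hr11 : ContinuousOn r11 (Icc a b)) (hr12 : ContinuousOn r12 (Icc a b))
    (hr21 : ContinuousOn r21 (Icc a b)) (hr22 : ContinuousOn r22 (Icc a b))
    (hf : ∀ x ∈ Icc a b, f x ≠ 0) (hg : ∀ x ∈ Icc a b, g x ≠ 0)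
    (hsys : ∀ x ∈ Icc a b,
      HasDerivWithinAt g (-(p1 x * f x) - q x * g x) (Icc a b) x ∧
      HasDerivWithinAt f (q x * f x + p2 x * g x) (Icc a b) x)
    (S St : ℕ → (ℝ → ℂ) × (ℝ → ℂ))
    (hS : S = spps p1 p2 r11 r12 r21 r22 f g x0 (sppsX0 p2 f g x0) (sppsY0 p1 f g x0))
    (hSt : St = spps p1 p2 r11 r12 r21 r22 f g x0 (sppsXt0 p2 f g x0) (sppsYt0 p1 f g x0))
    (c c1 c2 c3 : ℝ)
    (hc : c = max (max (supNorm a b (sppsX0 p2 f g x0)) (supNorm a b (sppsY0 p1 f g x0)))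
      (max (supNorm a b (sppsXt0 p2 f g x0)) (supNorm a b (sppsYt0 p1 f g x0))))
    (hc1 : c1 = max (supNorm a b (fun x => f x ^ 2 * r11 x + g x ^ 2 * r21 x))
      (supNorm a b (fun x => f x ^ 2 * r12 x + g x ^ 2 * r22 x)))
    (hc2 : c2 = max (supNorm a b (fun x => p1 x / g x ^ 2))
      (supNorm a b (fun x => p2 x / f x ^ 2)))
    (hc3 : c3 = max (max (supNorm a b (fun x => r11 x * f x / g x)) (supNorm a b r12))
      (max (supNorm a b r21) (supNorm a b (fun x => r22 x * g x / f x)))) :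
    ∀ n : ℕ, ∀ x ∈ Icc a b,
      max (max (‖(S n).1 x‖) (‖(S n).2 x‖))
          (max (‖(St n).1 x‖) (‖(St n).2 x‖))
        ≤ c * 2 ^ n * |x - x0| ^ n * (c1 * c2 * |x - x0| + c3) ^ n := by
  subst hS hSt
  have hfC : ContinuousOn f (Icc a b) := fun y hy => (hsys y hy).2.continuousWithinAt
  have hgC : ContinuousOn g (Icc a b) := fun y hy => (hsys y hy).1.continuousWithinAt
  have hle_bdd : ∀ (h : ℝ → ℂ) (M : ℝ), (∀ y ∈ Icc a b, ‖h y‖ ≤ M) →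
      ∀ y ∈ Icc a b, ‖h y‖ ≤ supNorm a b h := by
    intro h M hM y hy
    exact le_csSup ⟨M, by rintro _ ⟨t, ht, rfl⟩; exact hM t ht⟩ (mem_image_of_mem _ hy)
  have hle_cont : ∀ (h : ℝ → ℂ), ContinuousOn h (Icc a b) →
      ∀ y ∈ Icc a b, ‖h y‖ ≤ supNorm a b h := by
    intro h hcont y hy
    exact le_csSup (isCompact_Icc.bddAbove_image
      (continuous_norm.comp_continuousOn hcont)) (mem_image_of_mem _ hy)
  have hgne2 : ∀ y ∈ Icc a b, g y ^ 2 ≠ 0 := fun y hy => pow_ne_zero 2 (hg y hy)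
  have hfne2 : ∀ y ∈ Icc a b, f y ^ 2 ≠ 0 := fun y hy => pow_ne_zero 2 (hf y hy)
  have hcont_p1g : ContinuousOn (fun y => p1 y / g y ^ 2) (Icc a b) :=
    hp1.div (hgC.pow 2) hgne2
  have hcont_p2f : ContinuousOn (fun y => p2 y / f y ^ 2) (Icc a b) :=
    hp2.div (hfC.pow 2) hfne2
  have hcont_r11fg : ContinuousOn (fun y => r11 y * f y / g y) (Icc a b) :=
    (hr11.mul hfC).div hgC hg
  have hcont_r22gf : ContinuousOn (fun y => r22 y * g y / f y) (Icc a b) :=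
    (hr22.mul hgC).div hfC hf
  have hcont_w1 : ContinuousOn (fun y => f y ^ 2 * r11 y + g y ^ 2 * r21 y) (Icc a b) :=
    ((hfC.pow 2).mul hr11).add ((hgC.pow 2).mul hr21)
  have hcont_w2 : ContinuousOn (fun y => f y ^ 2 * r12 y + g y ^ 2 * r22 y) (Icc a b) :=
    ((hfC.pow 2).mul hr12).add ((hgC.pow 2).mul hr22)
  have hb_p1 : ∀ t ∈ Icc a b, ‖p1 t / g t ^ 2‖ ≤ c2 := fun t ht => by
    exact (hle_cont _ hcont_p1g t ht).trans (hc2 ▸ le_max_left _ _)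
  have hb_p2 : ∀ t ∈ Icc a b, ‖p2 t / f t ^ 2‖ ≤ c2 := fun t ht => by
    exact (hle_cont _ hcont_p2f t ht).trans (hc2 ▸ le_max_right _ _)
  have hb_r21 : ∀ t ∈ Icc a b, ‖r21 t‖ ≤ c3 := fun t ht => by
    exact (hle_cont _ hr21 t ht).trans (hc3 ▸ (le_max_left _ _).trans (le_max_right _ _))
  have hb_r12 : ∀ t ∈ Icc a b, ‖r12 t‖ ≤ c3 := fun t ht => by
    exact (hle_cont _ hr12 t ht).trans (hc3 ▸ (le_max_right _ _).trans (le_max_left _ _))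
  have hb_r11fg : ∀ t ∈ Icc a b, ‖r11 t * (f t / g t)‖ ≤ c3 := fun t ht => by
    rw [← mul_div_assoc]
    exact (hle_cont _ hcont_r11fg t ht).trans (hc3 ▸ (le_max_left _ _).trans (le_max_left _ _))
  have hb_r22gf : ∀ t ∈ Icc a b, ‖r22 t * (g t / f t)‖ ≤ c3 := fun t ht => by
    rw [← mul_div_assoc]
    exact (hle_cont _ hcont_r22gf t ht).trans (hc3 ▸ (le_max_right _ _).trans (le_max_right _ _))
  have hb_w1 : ∀ t ∈ Icc a b, ‖f t ^ 2 * r11 t + g t ^ 2 * r21 t‖ ≤ c1 := fun t ht => by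
    exact (hle_cont _ hcont_w1 t ht).trans (hc1 ▸ le_max_left _ _)
  have hb_w2 : ∀ t ∈ Icc a b, ‖f t ^ 2 * r12 t + g t ^ 2 * r22 t‖ ≤ c1 := fun t ht => by
    exact (hle_cont _ hcont_w2 t ht).trans (hc1 ▸ le_max_right _ _)
  have hc1nn : 0 ≤ c1 := le_trans (norm_nonneg _) (hb_w1 x0 hx0)
  have hc2nn : 0 ≤ c2 := le_trans (norm_nonneg _) (hb_p2 x0 hx0)
  have hc3nn : 0 ≤ c3 := le_trans (norm_nonneg _) (hb_r21 x0 hx0)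
  have hIbase : ∀ (h : ℝ → ℂ), (∀ t ∈ Icc a b, ‖h t‖ ≤ c2) →
      ∀ y ∈ Icc a b, ‖∫ s in x0..y, h s‖ ≤ c2 * (b - a) := by
    intro h hh y hy
    refine (intervalIntegral.norm_integral_le_of_norm_le_const (C := c2) ?_).trans ?_
    · intro t ht
      exact hh t (uIcc_subset_Icc hx0 hy (uIoc_subset_uIcc ht))
    · have habs : |y - x0| ≤ b - a := by
        rw [abs_sub_le_iff]
        constructor
        · linarith [hy.2, hx0.1]
        · linarith [hx0.2, hy.1]
      exact mul_le_mul_of_nonneg_left habs hc2nn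
  set M : ℝ := ‖f x0 * g x0‖ * (c2 * (b - a)) with hM
  have hMnn : 0 ≤ M :=
    mul_nonneg (norm_nonneg _) (mul_nonneg hc2nn (by linarith))
  have hbX0 : ∀ y ∈ Icc a b, ‖sppsX0 p2 f g x0 y‖ ≤ M + 1 := by
    intro y hy
    unfold sppsX0
    rw [norm_mul]
    have h1 := hIbase _ hb_p2 y hy
    nlinarith [norm_nonneg (f x0 * g x0), norm_nonneg (∫ s in x0..y, p2 s / f s ^ 2),
      mul_le_mul_of_nonneg_left h1 (norm_nonneg (f x0 * g x0))]
  have hbY0 : ∀ y ∈ Icc a b, ‖sppsY0 p1 f g x0 y‖ ≤ M + 1 := by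
    intro y hy
    unfold sppsY0
    refine (norm_add_le _ _).trans ?_
    rw [norm_one, norm_mul]
    have h1 := hIbase _ hb_p1 y hy
    nlinarith [norm_nonneg (f x0 * g x0), norm_nonneg (∫ s in x0..y, p1 s / g s ^ 2),
      mul_le_mul_of_nonneg_left h1 (norm_nonneg (f x0 * g x0))]
  have hbXt0 : ∀ y ∈ Icc a b, ‖sppsXt0 p2 f g x0 y‖ ≤ M + 1 := by
    intro y hy
    unfold sppsXt0
    refine (norm_sub_le _ _).trans ?_
    rw [norm_one, norm_mul]
    have h1 := hIbase _ hb_p2 y hy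
    nlinarith [norm_nonneg (f x0 * g x0), norm_nonneg (∫ s in x0..y, p2 s / f s ^ 2),
      mul_le_mul_of_nonneg_left h1 (norm_nonneg (f x0 * g x0))]
  have hbYt0 : ∀ y ∈ Icc a b, ‖sppsYt0 p1 f g x0 y‖ ≤ M + 1 := by
    intro y hy
    unfold sppsYt0
    rw [norm_mul, norm_neg]
    have h1 := hIbase _ hb_p1 y hy
    nlinarith [norm_nonneg (f x0 * g x0), norm_nonneg (∫ s in x0..y, p1 s / g s ^ 2),
      mul_le_mul_of_nonneg_left h1 (norm_nonneg (f x0 * g x0))]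
  have hX0c : ∀ y ∈ Icc a b, ‖sppsX0 p2 f g x0 y‖ ≤ c := fun y hy =>
    (hle_bdd _ (M + 1) hbX0 y hy).trans (hc ▸ (le_max_left _ _).trans (le_max_left _ _))
  have hY0c : ∀ y ∈ Icc a b, ‖sppsY0 p1 f g x0 y‖ ≤ c := fun y hy =>
    (hle_bdd _ (M + 1) hbY0 y hy).trans (hc ▸ (le_max_right _ _).trans (le_max_left _ _))
  have hXt0c : ∀ y ∈ Icc a b, ‖sppsXt0 p2 f g x0 y‖ ≤ c := fun y hy =>
    (hle_bdd _ (M + 1) hbXt0 y hy).trans (hc ▸ (le_max_left _ _).trans (le_max_right _ _))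
  have hYt0c : ∀ y ∈ Icc a b, ‖sppsYt0 p1 f g x0 y‖ ≤ c := fun y hy =>
    (hle_bdd _ (M + 1) hbYt0 y hy).trans (hc ▸ (le_max_right _ _).trans (le_max_right _ _))
  have hcnn : 0 ≤ c := le_trans (norm_nonneg _) (hX0c x0 hx0)
  intro n
  induction n with
  | zero =>
    intro x hx
    simp only [spps, pow_zero, mul_one]
    exact max_le (max_le (hX0c x hx) (hY0c x hx)) (max_le (hXt0c x hx) (hYt0c x hx))
  | succ n ih =>
    intro x hx
    have hKnn : 0 ≤ c1 * c2 * |x - x0| + c3 := by positivity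
    set D : ℝ := c * 2 ^ n * (c1 * c2 * |x - x0| + c3) ^ n with hD
    have hDnn : 0 ≤ D :=
      mul_nonneg (mul_nonneg hcnn (by positivity)) (pow_nonneg hKnn n)
    have hIH : ∀ t ∈ uIcc x0 x,
        max (max (‖(spps p1 p2 r11 r12 r21 r22 f g x0
              (sppsX0 p2 f g x0) (sppsY0 p1 f g x0) n).1 t‖)
            (‖(spps p1 p2 r11 r12 r21 r22 f g x0
              (sppsX0 p2 f g x0) (sppsY0 p1 f g x0) n).2 t‖))
          (max (‖(spps p1 p2 r11 r12 r21 r22 f g x0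
              (sppsXt0 p2 f g x0) (sppsYt0 p1 f g x0) n).1 t‖)
            (‖(spps p1 p2 r11 r12 r21 r22 f g x0
              (sppsXt0 p2 f g x0) (sppsYt0 p1 f g x0) n).2 t‖))
          ≤ D * |t - x0| ^ n := by
      intro t ht
      have htI : t ∈ Icc a b := uIcc_subset_Icc hx0 hx ht
      have e1 : c1 * c2 * |t - x0| + c3 ≤ c1 * c2 * |x - x0| + c3 := by
        have := mul_le_mul_of_nonneg_left (myAbsSub ht) (mul_nonneg hc1nn hc2nn)
        linarith
      have e2 : (c1 * c2 * |t - x0| + c3) ^ n ≤ (c1 * c2 * |x - x0| + c3) ^ n :=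
        pow_le_pow_left₀ (by positivity) e1 n
      calc _ ≤ c * 2 ^ n * |t - x0| ^ n * (c1 * c2 * |t - x0| + c3) ^ n := ih t htI
        _ ≤ c * 2 ^ n * |t - x0| ^ n * (c1 * c2 * |x - x0| + c3) ^ n :=
            mul_le_mul_of_nonneg_left e2
              (mul_nonneg (mul_nonneg hcnn (by positivity)) (pow_nonneg (abs_nonneg _) n))
        _ = D * |t - x0| ^ n := by rw [hD]; ring
    have hXb : ∀ t ∈ uIcc x0 x, ‖(spps p1 p2 r11 r12 r21 r22 f g x0
        (sppsX0 p2 f g x0) (sppsY0 p1 f g x0) n).1 t‖ ≤ D * |t - x0| ^ n := fun t ht => by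
        exact le_trans (le_trans (le_max_left _ _) (le_max_left _ _)) (hIH t ht)
    have hYb : ∀ t ∈ uIcc x0 x, ‖(spps p1 p2 r11 r12 r21 r22 f g x0
        (sppsX0 p2 f g x0) (sppsY0 p1 f g x0) n).2 t‖ ≤ D * |t - x0| ^ n := fun t ht => by
        exact le_trans (le_trans (le_max_right _ _) (le_max_left _ _)) (hIH t ht)
    have hXtb : ∀ t ∈ uIcc x0 x, ‖(spps p1 p2 r11 r12 r21 r22 f g x0
        (sppsXt0 p2 f g x0) (sppsYt0 p1 f g x0) n).1 t‖ ≤ D * |t - x0| ^ n := fun t ht => by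
        exact le_trans (le_trans (le_max_left _ _) (le_max_right _ _)) (hIH t ht)
    have hYtb : ∀ t ∈ uIcc x0 x, ‖(spps p1 p2 r11 r12 r21 r22 f g x0
        (sppsXt0 p2 f g x0) (sppsYt0 p1 f g x0) n).2 t‖ ≤ D * |t - x0| ^ n := fun t ht => by
        exact le_trans (le_trans (le_max_right _ _) (le_max_right _ _)) (hIH t ht)
    -- the generic estimate for one component
    have key : ∀ (X Y : ℝ → ℂ),
        (∀ t ∈ uIcc x0 x, ‖X t‖ ≤ D * |t - x0| ^ n) →
        (∀ t ∈ uIcc x0 x, ‖Y t‖ ≤ D * |t - x0| ^ n) →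
        (‖((n : ℂ) + 1) * ∫ s in x0..x,
            (-(r21 s) * X s - r22 s * (g s / f s) * Y s + p2 s / f s ^ 2 * ∫ t in x0..s,
              (X t * (f t ^ 2 * r11 t + g t ^ 2 * r21 t)
                + Y t * (f t ^ 2 * r12 t + g t ^ 2 * r22 t)))‖
          ≤ 2 * D * (c1 * c2 * |x - x0| + c3) * |x - x0| ^ (n + 1)) ∧
        (‖((n : ℂ) + 1) * ∫ s in x0..x,
            (r11 s * (f s / g s) * X s + r12 s * Y s + p1 s / g s ^ 2 * ∫ t in x0..s,
              (X t * (f t ^ 2 * r11 t + g t ^ 2 * r21 t)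
                + Y t * (f t ^ 2 * r12 t + g t ^ 2 * r22 t)))‖
          ≤ 2 * D * (c1 * c2 * |x - x0| + c3) * |x - x0| ^ (n + 1)) := by
      intro X Y hX hY
      have hZs : ∀ s ∈ uIcc x0 x, ‖∫ t in x0..s,
          (X t * (f t ^ 2 * r11 t + g t ^ 2 * r21 t)
            + Y t * (f t ^ 2 * r12 t + g t ^ 2 * r22 t))‖
          ≤ 2 * c1 * D * (|x - x0| * |s - x0| ^ n) := fun s hs =>
        myZbound _ _ X Y hx0 hx hDnn hc1nn hb_w1 hb_w2 hX hY hs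
      constructor
      · apply myOuter (by positivity)
        intro s hs
        have hs' : s ∈ uIcc x0 x := uIoc_subset_uIcc hs
        have hsI : s ∈ Icc a b := uIcc_subset_Icc hx0 hx hs'
        have t1 : ‖-(r21 s) * X s - r22 s * (g s / f s) * Y s + p2 s / f s ^ 2 * ∫ t in x0..s,
            (X t * (f t ^ 2 * r11 t + g t ^ 2 * r21 t)
              + Y t * (f t ^ 2 * r12 t + g t ^ 2 * r22 t))‖
            ≤ ‖r21 s‖ * ‖X s‖ + ‖r22 s * (g s / f s)‖ * ‖Y s‖
              + ‖p2 s / f s ^ 2‖ * ‖∫ t in x0..s,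
                (X t * (f t ^ 2 * r11 t + g t ^ 2 * r21 t)
                  + Y t * (f t ^ 2 * r12 t + g t ^ 2 * r22 t))‖ := by
          refine (norm_add_le _ _).trans (add_le_add ?_ (le_of_eq (norm_mul _ _)))
          refine (norm_sub_le _ _).trans (add_le_add ?_ (le_of_eq (norm_mul _ _)))
          exact le_of_eq (by rw [norm_mul, norm_neg])
        refine t1.trans ?_
        have b1 := mul_le_mul (hb_r21 s hsI) (hX s hs') (norm_nonneg _) hc3nn
        have b2 := mul_le_mul (hb_r22gf s hsI) (hY s hs') (norm_nonneg _) hc3nn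
        have b3 := mul_le_mul (hb_p2 s hsI) (hZs s hs') (norm_nonneg _) hc2nn
        nlinarith [pow_nonneg (abs_nonneg (s - x0)) n, abs_nonneg (x - x0)]
      · apply myOuter (by positivity)
        intro s hs
        have hs' : s ∈ uIcc x0 x := uIoc_subset_uIcc hs
        have hsI : s ∈ Icc a b := uIcc_subset_Icc hx0 hx hs'
        have t1 : ‖r11 s * (f s / g s) * X s + r12 s * Y s + p1 s / g s ^ 2 * ∫ t in x0..s,
            (X t * (f t ^ 2 * r11 t + g t ^ 2 * r21 t)
              + Y t * (f t ^ 2 * r12 t + g t ^ 2 * r22 t))‖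
            ≤ ‖r11 s * (f s / g s)‖ * ‖X s‖ + ‖r12 s‖ * ‖Y s‖
              + ‖p1 s / g s ^ 2‖ * ‖∫ t in x0..s,
                (X t * (f t ^ 2 * r11 t + g t ^ 2 * r21 t)
                  + Y t * (f t ^ 2 * r12 t + g t ^ 2 * r22 t))‖ := by
          refine (norm_add_le _ _).trans (add_le_add ?_ (le_of_eq (norm_mul _ _)))
          exact (norm_add_le _ _).trans
            (add_le_add (le_of_eq (norm_mul _ _)) (le_of_eq (norm_mul _ _)))
        refine t1.trans ?_
        have b1 := mul_le_mul (hb_r11fg s hsI) (hX s hs') (norm_nonneg _) hc3nn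
        have b2 := mul_le_mul (hb_r12 s hsI) (hY s hs') (norm_nonneg _) hc3nn
        have b3 := mul_le_mul (hb_p1 s hsI) (hZs s hs') (norm_nonneg _) hc2nn
        nlinarith [pow_nonneg (abs_nonneg (s - x0)) n, abs_nonneg (x - x0)]
    obtain ⟨k1, k2⟩ := key _ _ hXb hYb
    obtain ⟨k3, k4⟩ := key _ _ hXtb hYtb
    have hfin : 2 * D * (c1 * c2 * |x - x0| + c3) * |x - x0| ^ (n + 1)
        = c * 2 ^ (n + 1) * |x - x0| ^ (n + 1) * (c1 * c2 * |x - x0| + c3) ^ (n + 1) := by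
      rw [hD]; ring
    refine max_le (max_le ?_ ?_) (max_le ?_ ?_)
    · rw [← hfin]; exact k1
    · rw [← hfin]; exact k2
    · rw [← hfin]; exact k3
    · rw [← hfin]; exact k4
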